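/- (Proposition 4) Under the sub-population Bernoulli design with in-experiment probability p and treatment probability π, the expectation of the Horvitz–Thompson estimator built from Y satisfies E[τ̂¹(p,π)] = (1/n) Σ_{i ≠ j} (γ_{i,j} + pπ ζ_{i,j}). -/

import Mathlib

open Finset

noncomputable section

/-- Real-valued indicator of a Boolean. -/
def ind (b : Bool) : ℝ := if b then 1 else 0

/-- Dyadic linear potential-outcome model for an ordered pair `(i, j)`:
`z_{i,j}(W) = α_{i,j} + β_{i,j} W_i + γ_{i,j} W_j + ζ_{i,j} W_i W_j`. -/
def zDyad {n : ℕ} (α β γ ζ : Fin n → Fin n → ℝ) (W : Fin n → ℝ) (i j : Fin n) : ℝ :=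
  α i j + β i j * W i + γ i j * W j + ζ i j * W i * W j

/-- Upstream-aggregated outcome `Y_j(W) = Σ_{i ≠ j} z_{i,j}(W)`. -/
def Yagg {n : ℕ} (α β γ ζ : Fin n → Fin n → ℝ) (W : Fin n → ℝ) (j : Fin n) : ℝ :=
  ∑ i ∈ ({j}ᶜ : Finset (Fin n)), zDyad α β γ ζ W i j

/-- Downstream-aggregated outcome (diffusion metric) `D_j(W) = Σ_{i ≠ j} z_{j,i}(W)`. -/
def Dagg {n : ℕ} (α β γ ζ : Fin n → Fin n → ℝ) (W : Fin n → ℝ) (j : Fin n) : ℝ :=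
  ∑ i ∈ ({j}ᶜ : Finset (Fin n)), zDyad α β γ ζ W j i

/-- Expectation over the sub-population design: `v ∈ {0,1}^n` are i.i.d. Bernoulli(`p`)
in-experiment indicators, `u ∈ {0,1}^n` are i.i.d. Bernoulli(`q`) treatment coins, all
`2n` variables mutually independent. -/
def expectVU (n : ℕ) (p q : ℝ) (f : (Fin n → Bool) → (Fin n → Bool) → ℝ) : ℝ :=
  ∑ v : Fin n → Bool, ∑ u : Fin n → Bool,
    (∏ i, if v i then p else 1 - p) * (∏ i, if u i then q else 1 - q) * f v u

/-- Realized treatment in the sub-population design: `W_i = V_i U_i`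
(units outside the experiment receive control). -/
def treatVU {n : ℕ} (v u : Fin n → Bool) : Fin n → ℝ :=
  fun i => ind (v i && u i)

/-- Horvitz–Thompson estimator built from `Y` in the sub-population design:
`τ̂¹(p,q)(v,u) = (1/n) Σ_i [V_i W_i Y_i(W)/(pq) − V_i (1 − W_i) Y_i(W)/(p(1 − q))]`. -/
def tauHat1Sub {n : ℕ} (α β γ ζ : Fin n → Fin n → ℝ) (p q : ℝ)
    (v u : Fin n → Bool) : ℝ :=
  (1 / (n : ℝ)) * ∑ i,
    (ind (v i) * treatVU v u i * Yagg α β γ ζ (treatVU v u) i / (p * q) -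
      ind (v i) * (1 - treatVU v u i) * Yagg α β γ ζ (treatVU v u) i / (p * (1 - q)))

/-- Horvitz–Thompson estimator built from `D` in the sub-population design. -/
def tauHat2Sub {n : ℕ} (α β γ ζ : Fin n → Fin n → ℝ) (p q : ℝ)
    (v u : Fin n → Bool) : ℝ :=
  (1 / (n : ℝ)) * ∑ i,
    (ind (v i) * treatVU v u i * Dagg α β γ ζ (treatVU v u) i / (p * q) -
      ind (v i) * (1 - treatVU v u i) * Dagg α β γ ζ (treatVU v u) i / (p * (1 - q)))

/-- Proposition 4: Under the sub-population Bernoulli design with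
in-experiment probability `p` and treatment probability `q`,
`E[τ̂¹(p,q)] = (1/n) Σ_{i ≠ j} (γ_{i,j} + pq ζ_{i,j})`. -/
def Pr (p : ℝ) (b : Bool) : ℝ := if b then p else 1 - p

lemma sum_pi_prod (n : ℕ) (g : Fin n → Bool → ℝ) :
    ∑ w : Fin n → Bool, ∏ k, g k (w k) = ∏ k, (g k true + g k false) := by
  classical
  rw [show (Finset.univ : Finset (Fin n → Bool)) = Fintype.piFinset (fun _ => univ) from
    Fintype.piFinset_univ.symm, ← Finset.prod_univ_sum]
  simp [Fintype.sum_bool]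

lemma sum_weight_delta (n : ℕ) (p : ℝ) (i j : Fin n) (hij : i ≠ j) (a c : Bool) :
    ∑ v : Fin n → Bool, (∏ k, Pr p (v k)) *
      ((if v i = a then (1:ℝ) else 0) * (if v j = c then 1 else 0))
      = Pr p a * Pr p c := by
  classical
  have h : ∀ v : Fin n → Bool, (∏ k, Pr p (v k)) *
      ((if v i = a then (1:ℝ) else 0) * (if v j = c then 1 else 0))
      = ∏ k, (Pr p (v k) * ((if k = i then (if v k = a then (1:ℝ) else 0) else 1) *
          (if k = j then (if v k = c then (1:ℝ) else 0) else 1))) := by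
    intro v
    rw [Finset.prod_mul_distrib, Finset.prod_mul_distrib]
    congr 1
    congr 1
    · rw [Finset.prod_ite_eq' univ i (fun k => if v k = a then (1:ℝ) else 0)]
      simp
    · rw [Finset.prod_ite_eq' univ j (fun k => if v k = c then (1:ℝ) else 0)]
      simp
  simp only [h]
  rw [sum_pi_prod n (fun k b => Pr p b * ((if k = i then if b = a then (1:ℝ) else 0 else 1) * if k = j then if b = c then (1:ℝ) else 0 else 1))]
  have h2 : ∀ k : Fin n,
      (Pr p true * ((if k = i then (if true = a then (1:ℝ) else 0) else 1) *
          (if k = j then (if true = c then (1:ℝ) else 0) else 1)) +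
       Pr p false * ((if k = i then (if false = a then (1:ℝ) else 0) else 1) *
          (if k = j then (if false = c then (1:ℝ) else 0) else 1)))
      = if k = i then Pr p a else if k = j then Pr p c else 1 := by
    intro k
    by_cases hki : k = i
    · subst hki
      simp only [if_pos rfl, if_neg hij]
      cases a <;> simp [Pr] <;> try ring
    · by_cases hkj : k = j
      · subst hkj
        simp only [if_neg hki, if_pos rfl]
        cases c <;> simp [Pr] <;> try ring
      · simp [hki, hkj, Pr]
  simp only [h2]
  rw [← Finset.prod_mul_prod_compl ({i, j} : Finset (Fin n)), Finset.prod_pair hij]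
  have : ∀ k ∈ ({i, j} : Finset (Fin n))ᶜ,
      (if k = i then Pr p a else if k = j then Pr p c else 1) = 1 := by
    intro k hk
    simp only [Finset.mem_compl, Finset.mem_insert, Finset.mem_singleton] at hk
    push_neg at hk
    simp [hk.1, hk.2]
  rw [Finset.prod_eq_one this]
  simp [hij, Ne.symm hij]

lemma E2 (n : ℕ) (p : ℝ) (i j : Fin n) (hij : i ≠ j) (f : Bool → Bool → ℝ) :
    ∑ v : Fin n → Bool, (∏ k, Pr p (v k)) * f (v i) (v j)
      = ∑ a : Bool, ∑ c : Bool, Pr p a * Pr p c * f a c := by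
  classical
  have hf : ∀ x y : Bool, f x y = ∑ a : Bool, ∑ c : Bool,
      ((if x = a then (1:ℝ) else 0) * (if y = c then 1 else 0)) * f a c := by
    intro x y; cases x <;> cases y <;> simp [Fintype.sum_bool]
  calc ∑ v : Fin n → Bool, (∏ k, Pr p (v k)) * f (v i) (v j)
      = ∑ v : Fin n → Bool, (∏ k, Pr p (v k)) * ∑ a : Bool, ∑ c : Bool,
          ((if v i = a then (1:ℝ) else 0) * (if v j = c then 1 else 0)) * f a c :=
        Finset.sum_congr rfl fun v _ => by rw [← hf]
    _ = ∑ a : Bool, ∑ c : Bool, (∑ v : Fin n → Bool, (∏ k, Pr p (v k)) *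
          ((if v i = a then (1:ℝ) else 0) * (if v j = c then 1 else 0))) * f a c := by
        simp only [Finset.mul_sum]
        rw [Finset.sum_comm]
        refine Finset.sum_congr rfl fun a _ => ?_
        rw [Finset.sum_comm]
        refine Finset.sum_congr rfl fun c _ => ?_
        rw [Finset.sum_mul]
        exact Finset.sum_congr rfl fun v _ => by ring
    _ = ∑ a : Bool, ∑ c : Bool, Pr p a * Pr p c * f a c := by
        refine Finset.sum_congr rfl fun a _ => Finset.sum_congr rfl fun c _ => ?_
        rw [sum_weight_delta n p i j hij a c]

lemma E4 (n : ℕ) (p q : ℝ) (i j : Fin n) (hij : i ≠ j) (f : Bool → Bool → Bool → Bool → ℝ) :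
    (∑ v : Fin n → Bool, ∑ u : Fin n → Bool,
        (∏ k, Pr p (v k)) * (∏ k, Pr q (u k)) * f (v i) (v j) (u i) (u j))
      = ∑ a : Bool, ∑ c : Bool, ∑ b : Bool, ∑ d : Bool,
          Pr p a * Pr p c * (Pr q b * Pr q d) * f a c b d := by
  classical
  have step1 : ∀ v : Fin n → Bool,
      (∑ u : Fin n → Bool, (∏ k, Pr p (v k)) * (∏ k, Pr q (u k)) * f (v i) (v j) (u i) (u j))
        = (∏ k, Pr p (v k)) * ∑ b : Bool, ∑ d : Bool, Pr q b * Pr q d * f (v i) (v j) b d := by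
    intro v
    rw [show (∑ b : Bool, ∑ d : Bool, Pr q b * Pr q d * f (v i) (v j) b d)
        = ∑ u : Fin n → Bool, (∏ k, Pr q (u k)) * f (v i) (v j) (u i) (u j) from
      (E2 n q i j hij (fun b d => f (v i) (v j) b d)).symm, Finset.mul_sum]
    exact Finset.sum_congr rfl fun u _ => by ring
  calc (∑ v : Fin n → Bool, ∑ u : Fin n → Bool,
        (∏ k, Pr p (v k)) * (∏ k, Pr q (u k)) * f (v i) (v j) (u i) (u j))
      = ∑ v : Fin n → Bool, (∏ k, Pr p (v k)) *
          ∑ b : Bool, ∑ d : Bool, Pr q b * Pr q d * f (v i) (v j) b d :=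
        Finset.sum_congr rfl fun v _ => step1 v
    _ = ∑ a : Bool, ∑ c : Bool, Pr p a * Pr p c *
          ∑ b : Bool, ∑ d : Bool, Pr q b * Pr q d * f a c b d :=
        E2 n p i j hij (fun a c => ∑ b : Bool, ∑ d : Bool, Pr q b * Pr q d * f a c b d)
    _ = ∑ a : Bool, ∑ c : Bool, ∑ b : Bool, ∑ d : Bool,
          Pr p a * Pr p c * (Pr q b * Pr q d) * f a c b d := by
        refine Finset.sum_congr rfl fun a _ => Finset.sum_congr rfl fun c _ => ?_
        rw [Finset.mul_sum]
        refine Finset.sum_congr rfl fun b _ => ?_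
        rw [Finset.mul_sum]
        exact Finset.sum_congr rfl fun d _ => by ring

def Gterm (A B C D p q : ℝ) (a c b d : Bool) : ℝ :=
  ind c * ind (c && d) *
      (A + B * ind (a && b) + C * ind (c && d) + D * ind (a && b) * ind (c && d)) / (p * q) -
    ind c * (1 - ind (c && d)) *
      (A + B * ind (a && b) + C * ind (c && d) + D * ind (a && b) * ind (c && d)) / (p * (1 - q))

lemma boolCalc (A B C D p q : ℝ) (hp : p ≠ 0) (hq : q ≠ 0) (hq1 : (1:ℝ) - q ≠ 0) :
    ∑ a : Bool, ∑ c : Bool, ∑ b : Bool, ∑ d : Bool,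
      Pr p a * Pr p c * (Pr q b * Pr q d) * Gterm A B C D p q a c b d
      = C + p * q * D := by
  simp only [Fintype.sum_bool, Gterm, Pr, ind]
  simp only [Bool.and_self, Bool.and_true, Bool.and_false, if_true, if_false, Bool.false_eq_true, ite_false]
  field_simp
  ring

lemma tauHat1Sub_eq {n : ℕ} (α β γ ζ : Fin n → Fin n → ℝ) (p q : ℝ) (v u : Fin n → Bool) :
    tauHat1Sub α β γ ζ p q v u = (1 / (n : ℝ)) * ∑ j, ∑ i ∈ ({j}ᶜ : Finset (Fin n)),
      Gterm (α i j) (β i j) (γ i j) (ζ i j) p q (v i) (v j) (u i) (u j) := by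
  unfold tauHat1Sub Yagg zDyad treatVU Gterm
  congr 1
  refine Finset.sum_congr rfl fun j _ => ?_
  rw [Finset.mul_sum, Finset.sum_div, Finset.mul_sum, Finset.sum_div,
    ← Finset.sum_sub_distrib]

theorem expect_tauHat1Sub
    (n : ℕ) (hn : 1 ≤ n) (α β γ ζ : Fin n → Fin n → ℝ)
    (p q : ℝ) (hp0 : 0 < p) (hp1 : p ≤ 1) (hq0 : 0 < q) (hq1 : q < 1) :
    expectVU n p q (tauHat1Sub α β γ ζ p q) =
      (1 / (n : ℝ)) * ∑ j, ∑ i ∈ ({j}ᶜ : Finset (Fin n)), (γ i j + p * q * ζ i j) := by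
  classical
  have hp : p ≠ 0 := ne_of_gt hp0
  have hq : q ≠ 0 := ne_of_gt hq0
  have hq1' : (1 : ℝ) - q ≠ 0 := ne_of_gt (by linarith)
  calc expectVU n p q (tauHat1Sub α β γ ζ p q)
      = ∑ v : Fin n → Bool, ∑ u : Fin n → Bool,
          (∏ k, Pr p (v k)) * (∏ k, Pr q (u k)) *
          ((1 / (n : ℝ)) * ∑ j, ∑ i ∈ ({j}ᶜ : Finset (Fin n)),
            Gterm (α i j) (β i j) (γ i j) (ζ i j) p q (v i) (v j) (u i) (u j)) := by
        simp only [expectVU, tauHat1Sub_eq, Pr]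
    _ = ∑ v : Fin n → Bool, ∑ u : Fin n → Bool, ∑ j, ∑ i ∈ ({j}ᶜ : Finset (Fin n)),
          (∏ k, Pr p (v k)) * (∏ k, Pr q (u k)) *
          ((1 / (n : ℝ)) *
            Gterm (α i j) (β i j) (γ i j) (ζ i j) p q (v i) (v j) (u i) (u j)) := by
        simp only [Finset.mul_sum]
    _ = ∑ v : Fin n → Bool, ∑ j, ∑ u : Fin n → Bool, ∑ i ∈ ({j}ᶜ : Finset (Fin n)),
          (∏ k, Pr p (v k)) * (∏ k, Pr q (u k)) *
          ((1 / (n : ℝ)) *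
            Gterm (α i j) (β i j) (γ i j) (ζ i j) p q (v i) (v j) (u i) (u j)) :=
        Finset.sum_congr rfl fun v _ => Finset.sum_comm
    _ = ∑ j, ∑ v : Fin n → Bool, ∑ u : Fin n → Bool, ∑ i ∈ ({j}ᶜ : Finset (Fin n)),
          (∏ k, Pr p (v k)) * (∏ k, Pr q (u k)) *
          ((1 / (n : ℝ)) *
            Gterm (α i j) (β i j) (γ i j) (ζ i j) p q (v i) (v j) (u i) (u j)) :=
        Finset.sum_comm
    _ = ∑ j, ∑ v : Fin n → Bool, ∑ i ∈ ({j}ᶜ : Finset (Fin n)), ∑ u : Fin n → Bool,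
          (∏ k, Pr p (v k)) * (∏ k, Pr q (u k)) *
          ((1 / (n : ℝ)) *
            Gterm (α i j) (β i j) (γ i j) (ζ i j) p q (v i) (v j) (u i) (u j)) :=
        Finset.sum_congr rfl fun j _ => Finset.sum_congr rfl fun v _ => Finset.sum_comm
    _ = ∑ j, ∑ i ∈ ({j}ᶜ : Finset (Fin n)), ∑ v : Fin n → Bool, ∑ u : Fin n → Bool,
          (∏ k, Pr p (v k)) * (∏ k, Pr q (u k)) *
          ((1 / (n : ℝ)) *
            Gterm (α i j) (β i j) (γ i j) (ζ i j) p q (v i) (v j) (u i) (u j)) :=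
        Finset.sum_congr rfl fun j _ => Finset.sum_comm
    _ = ∑ j, ∑ i ∈ ({j}ᶜ : Finset (Fin n)), (1 / (n : ℝ)) * (γ i j + p * q * ζ i j) := by
        refine Finset.sum_congr rfl fun j _ => Finset.sum_congr rfl fun i hi => ?_
        have hij : i ≠ j := by simpa using hi
        calc (∑ v : Fin n → Bool, ∑ u : Fin n → Bool,
              (∏ k, Pr p (v k)) * (∏ k, Pr q (u k)) *
              ((1 / (n : ℝ)) *
                Gterm (α i j) (β i j) (γ i j) (ζ i j) p q (v i) (v j) (u i) (u j)))
            = ∑ a : Bool, ∑ c : Bool, ∑ b : Bool, ∑ d : Bool,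
                Pr p a * Pr p c * (Pr q b * Pr q d) *
                ((1 / (n : ℝ)) * Gterm (α i j) (β i j) (γ i j) (ζ i j) p q a c b d) :=
              E4 n p q i j hij (fun a c b d =>
                (1 / (n : ℝ)) * Gterm (α i j) (β i j) (γ i j) (ζ i j) p q a c b d)
          _ = (1 / (n : ℝ)) * ∑ a : Bool, ∑ c : Bool, ∑ b : Bool, ∑ d : Bool,
                Pr p a * Pr p c * (Pr q b * Pr q d) *
                Gterm (α i j) (β i j) (γ i j) (ζ i j) p q a c b d := by
              simp only [Finset.mul_sum]
              refine Finset.sum_congr rfl fun a _ => Finset.sum_congr rfl fun c _ =>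
                Finset.sum_congr rfl fun b _ => Finset.sum_congr rfl fun d _ => by ring
          _ = (1 / (n : ℝ)) * (γ i j + p * q * ζ i j) := by
              rw [boolCalc _ _ _ _ _ _ hp hq hq1']
    _ = (1 / (n : ℝ)) * ∑ j, ∑ i ∈ ({j}ᶜ : Finset (Fin n)), (γ i j + p * q * ζ i j) := by
        simp only [Finset.mul_sum]
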